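/- Let S be a commutative ring of characteristic p and let G be a finite group of automorphisms of S of order p^n such that S is a Galois extension of the fixed ring R = S^G with group G. Then the group cohomology H^q(G, S) vanishes for all q ≥ 1, where G acts on the additive group of S through its action by ring automorphisms. -/

import Mathlib

/-!
STATEMENT 3 (Lemma 1.1 of Saltman, quoted in the paper):
Let S be a commutative ring of characteristic p and let G be a finite group of order p^n
acting on S by ring automorphisms such that S is a Galois extension of R = S^G with
group G.  Then H^q(G, S) = 0 for all q ≥ 1, where G acts on the additive group of S.
-/

set_option linter.unusedSectionVars false
set_option linter.unusedVariables false

noncomputable section AuxiliaryLemmas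

open Finset Polynomial CategoryTheory groupCohomology

section TraceOne
variable (G : Type) [Group G] [Fintype G] (S : Type) [CommRing S] [MulSemiringAction G S]

def fixedSubring : Subring S where
  carrier := {s | ∀ g : G, g • s = s}
  one_mem' := fun g => smul_one g
  mul_mem' := fun {a b} ha hb g => by rw [smul_mul', ha g, hb g]
  zero_mem' := fun g => smul_zero g
  add_mem' := fun {a b} ha hb g => by rw [smul_add, ha g, hb g]
  neg_mem' := fun {a} ha g => by rw [smul_neg, ha g]

lemma fixedSubring_isIntegral : Algebra.IsIntegral (fixedSubring G S) S := by
  constructor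
  intro s
  have hco : (↑(prodXSubSMul G S s).coeffs : Set S) ⊆ ↑(fixedSubring G S) := by
    intro c hc
    obtain ⟨n, -, hn⟩ := Polynomial.mem_coeffs_iff.1 hc
    exact fun g => hn.symm ▸ prodXSubSMul.coeff G S s g n
  refine ⟨(prodXSubSMul G S s).toSubring (fixedSubring G S) hco, ?_, ?_⟩
  · rw [Polynomial.monic_toSubring]
    exact prodXSubSMul.monic G S s
  · have : Polynomial.eval₂ (Subring.subtype (fixedSubring G S)) s
        ((prodXSubSMul G S s).toSubring (fixedSubring G S) hco) = 0 := by
      rw [Polynomial.eval₂_eq_eval_map, Polynomial.map_toSubring]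
      exact prodXSubSMul.eval G S s
    exact this

variable {G S}

lemma exists_trace_not_mem
    (hgalois : ∀ M : Ideal S, M.IsMaximal → ∀ σ : G, σ ≠ 1 → ∃ s : S, σ • s - s ∉ M)
    (M : Ideal S) (hM : M.IsMaximal) : ∃ x : S, ∑ g : G, g • x ∉ M := by
  by_contra h
  push_neg at h
  haveI := hM
  letI : Field (S ⧸ M) := Ideal.Quotient.field M
  set π : S →+* S ⧸ M := Ideal.Quotient.mk M with hπ
  set φ : G → (S →* S ⧸ M) := fun σ => (π.comp (MulSemiringAction.toRingHom G S σ)).toMonoidHom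
    with hφ
  have happ : ∀ (σ : G) (s : S), φ σ s = π (σ • s) := fun σ s => rfl
  have hinj : Function.Injective φ := by
    intro σ τ hst
    by_contra hne
    have hρ : τ⁻¹ * σ ≠ 1 := by
      simpa [inv_mul_eq_one] using Ne.symm hne
    have hsurj : Function.Surjective (MulSemiringAction.toRingHom G S τ) :=
      fun y => ⟨τ⁻¹ • y, smul_inv_smul τ y⟩
    haveI : (M.comap (MulSemiringAction.toRingHom G S τ)).IsMaximal :=
      Ideal.comap_isMaximal_of_surjective _ hsurj
    obtain ⟨s, hs⟩ := hgalois (M.comap (MulSemiringAction.toRingHom G S τ)) this (τ⁻¹ * σ) hρ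
    apply hs
    show τ • ((τ⁻¹ * σ) • s - s) ∈ M
    rw [smul_sub, smul_smul, mul_inv_cancel_left]
    rw [← Ideal.Quotient.eq_zero_iff_mem]
    have := DFunLike.congr_fun hst s
    rw [happ, happ] at this
    rw [map_sub]
    show π (σ • s) - π (τ • s) = 0
    rw [this, sub_self]
  have hli := (linearIndependent_monoidHom S (S ⧸ M)).comp φ hinj
  have h0 : ∑ σ : G, (1 : S ⧸ M) • (((fun f : S →* S ⧸ M => (f : S → S ⧸ M)) ∘ φ) σ) = 0 := by
    funext s
    simp only [Finset.sum_apply, Pi.zero_apply, one_smul, Function.comp_apply]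
    have : ∑ σ : G, φ σ s = π (∑ σ : G, σ • s) := by
      rw [map_sum]
      rfl
    rw [this, Ideal.Quotient.eq_zero_iff_mem]
    exact h s
  have := Fintype.linearIndependent_iff.1 hli (fun _ => (1 : S ⧸ M)) h0 1
  exact one_ne_zero this


lemma trace_mem_fixed (s : S) : ∀ g : G, g • (∑ h : G, h • s) = ∑ h : G, h • s := by
  intro g
  rw [Finset.smul_sum]
  simp_rw [smul_smul]
  exact Fintype.sum_bijective (g * ·) (Group.mulLeft_bijective g) _ _ (fun h => rfl)

def traceIdeal (G : Type) [Group G] [Fintype G] (S : Type) [CommRing S]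
    [MulSemiringAction G S] : Ideal (fixedSubring G S) where
  carrier := {r : fixedSubring G S | ∃ s : S, ∑ g : G, g • s = (r : S)}
  add_mem' := by
    rintro a b ⟨s, hs⟩ ⟨t, ht⟩
    refine ⟨s + t, ?_⟩
    push_cast
    rw [← hs, ← ht, ← Finset.sum_add_distrib]
    simp [smul_add]
  zero_mem' := ⟨0, by simp⟩
  smul_mem' := by
    rintro r x ⟨s, hs⟩
    refine ⟨(r : S) * s, ?_⟩
    simp only [smul_eq_mul]
    push_cast
    rw [← hs, Finset.mul_sum]
    refine Finset.sum_congr rfl fun g _ => ?_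
    rw [smul_mul', r.2 g]

lemma exists_trace_one
    (hgalois : ∀ M : Ideal S, M.IsMaximal → ∀ σ : G, σ ≠ 1 → ∃ s : S, σ • s - s ∉ M) :
    ∃ c : S, ∑ g : G, g • c = 1 := by
  classical
  haveI := fixedSubring_isIntegral G S
  set R := fixedSubring G S with hR
  set T := traceIdeal G S with hT
  have hTtop : T = ⊤ := by
    by_contra hTne
    obtain ⟨𝔪, h𝔪, hle⟩ := T.exists_le_maximal hTne
    obtain ⟨M, hMmax, hMcomap⟩ := Ideal.exists_ideal_over_maximal_of_isIntegral (S := S) 𝔪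
      (fun x hx => by
        have hx0 : (algebraMap R S) x = 0 := hx
        have : x = 0 := Subtype.ext hx0
        rw [this]; exact 𝔪.zero_mem)
    obtain ⟨x, hx⟩ := exists_trace_not_mem hgalois M hMmax
    apply hx
    have hmem : (⟨∑ g : G, g • x, trace_mem_fixed x⟩ : R) ∈ T := ⟨x, rfl⟩
    have h2 := hle hmem
    rw [← hMcomap] at h2
    exact Ideal.mem_comap.1 h2
  have h1 : (1 : R) ∈ T := hTtop ▸ Submodule.mem_top
  obtain ⟨c, hc⟩ := h1
  exact ⟨c, by simpa using hc⟩

end TraceOne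

variable (G : Type) [Group G] [Fintype G] (S : Type) [CommRing S] [MulSemiringAction G S]

noncomputable abbrev A' : Rep ℤ G := Rep.ofDistribMulAction ℤ G S

-- Fin lemmas
lemma LA {α : Type*} (m : ℕ) (v : Fin (m+2) → α) (x : α) :
    (Fin.snoc v x : Fin (m+3) → α) ∘ (Fin.last (m+2)).succAbove = v := by
  funext i
  simp [Fin.succAbove_last]

lemma LB {α : Type*} (m : ℕ) (v : Fin (m+2) → α) (x : α) (p : Fin (m+2)) :
    (Fin.snoc v x : Fin (m+3) → α) ∘ (Fin.castSucc p).succAbove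
      = Fin.snoc (v ∘ p.succAbove) x := by
  funext i
  refine Fin.lastCases ?_ (fun i => ?_) i
  · rw [Function.comp_apply, Fin.succAbove_of_le_castSucc _ _ (by
      simp [Fin.le_def, Fin.is_le p]), Fin.succ_last, Fin.snoc_last, Fin.snoc_last]
  · rw [Function.comp_apply, Fin.castSucc_succAbove_castSucc, Fin.snoc_castSucc,
      Fin.snoc_castSucc, Function.comp_apply]

lemma Lsmul {m : ℕ} (g : G) (u : Fin (m+1) → G) (x : G) :
    (Fin.snoc ((g • u : Fin (m+1) → G)) x : Fin (m+2) → G)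
      = (g • (Fin.snoc u (g⁻¹ * x) : Fin (m+2) → G) : Fin (m+2) → G) := by
  funext i
  refine Fin.lastCases ?_ (fun i => ?_) i
  · simp only [Pi.smul_apply, Fin.snoc_last, smul_eq_mul, mul_inv_cancel_left]
  · simp only [Pi.smul_apply, Fin.snoc_castSucc, smul_eq_mul]

variable {G S}

set_option maxHeartbeats 1000000 in
lemma key (c : S) (hc : ∑ g : G, g • c = 1) (m : ℕ)
    (F : Rep.ofMulAction ℤ G (Fin (m+2) → G) ⟶ A' G S)
    (hF : ∀ w : Fin (m+3) → G,
      ∑ p : Fin (m+3), (-1:ℤ)^(p:ℕ) • (F.hom (MonoidAlgebra.single (w ∘ p.succAbove) 1) : S) = 0) :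
    ∃ E : Rep.ofMulAction ℤ G (Fin (m+1) → G) ⟶ A' G S,
      ∀ v : Fin (m+2) → G,
        ∑ p : Fin (m+2), (-1:ℤ)^(p:ℕ) • (E.hom (MonoidAlgebra.single (v ∘ p.succAbove) 1) : S)
          = (F.hom (MonoidAlgebra.single v 1) : S) := by
  classical
  set Fv : (Fin (m+2) → G) → S := fun w => F.hom (MonoidAlgebra.single w 1) with hFv
  have hFequiv : ∀ (g : G) (w : Fin (m+2) → G), Fv ((g • w : Fin (m+2) → G)) = g • Fv w := by
    intro g w
    have := Rep.hom_comm_apply F g (MonoidAlgebra.single w 1)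
    rw [hFv]
    simp only
    rw [show ((Rep.ofMulAction ℤ G (Fin (m+2) → G)).ρ g) (MonoidAlgebra.single w 1)
        = MonoidAlgebra.single (g • w) 1 from Representation.ofMulAction_single g w 1] at this
    rw [this]
    exact Rep.ofDistribMulAction_ρ_apply_apply ℤ G S g _
  set Ef : (Fin (m+1) → G) → S :=
    fun u => (-1:ℤ)^(m+1) • ∑ x : G, (x • c) * Fv (Fin.snoc u x) with hEf
  have hEequiv : ∀ (g : G) (u : Fin (m+1) → G), Ef ((g • u : Fin (m+1) → G)) = g • Ef u := by
    intro g u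
    rw [hEf]
    simp only
    rw [smul_comm (g) ((-1:ℤ)^(m+1))]
    congr 1
    rw [Finset.smul_sum]
    refine (Fintype.sum_equiv (Equiv.mulLeft g) _ _ fun y => ?_).symm
    rw [Equiv.coe_mulLeft, Lsmul]
    rw [show g⁻¹ * (g * y) = y by group]
    rw [hFequiv, smul_mul', smul_smul]
  let L : MonoidAlgebra ℤ (Fin (m+1) → G) →ₗ[ℤ] S :=
    (Finsupp.lift S ℤ (Fin (m+1) → G) Ef) ∘ₗ (MonoidAlgebra.coeffLinearEquiv ℤ).toLinearMap
  have hE1 : ∀ u : Fin (m+1) → G, L (MonoidAlgebra.single u 1) = Ef u := by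
    intro u
    simp [L]
  have hcomm : ∀ (g : G) (x : MonoidAlgebra ℤ (Fin (m+1) → G)),
      L ((Rep.ofMulAction ℤ G (Fin (m+1) → G)).ρ g x) = (A' G S).ρ g (L x) := by
    intro g x
    induction x using MonoidAlgebra.induction_linear with
    | zero => simp
    | add a b ha hb =>
      simp only [map_add, ha, hb]
      exact (map_add _ _ _).symm
    | single u r =>
      have hr : MonoidAlgebra.single u r = r • MonoidAlgebra.single u (1:ℤ) := by
        rw [MonoidAlgebra.smul_single, smul_eq_mul, mul_one]
      rw [hr, map_smul, map_smul, map_smul, hE1, Representation.ofMulAction_single, hE1, hEequiv,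
        Rep.ofDistribMulAction_ρ_apply_apply, smul_comm]
  refine ⟨Rep.ofHom (LinearMap.intertwiningMap_of_isIntertwiningMap _ _ L hcomm), fun v => ?_⟩
  · show ∑ p : Fin (m+2), (-1:ℤ)^(p:ℕ) •
        (L (MonoidAlgebra.single (v ∘ p.succAbove) 1) : S) = Fv v
    have hinner : ∀ x : G, ∑ p : Fin (m+2), (-1:ℤ)^(p:ℕ) • Fv (Fin.snoc (v ∘ p.succAbove) x)
        = (-1:ℤ)^(m+3) • Fv v := by
      intro x
      have h := hF (Fin.snoc v x)
      rw [Fin.sum_univ_castSucc] at h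
      simp only [Fin.coe_castSucc, Fin.val_last, LA, LB] at h
      have h2 := eq_neg_of_add_eq_zero_left h
      simp only [hFv]
      refine h2.trans ?_
      rw [← neg_smul]
      congr 1
      ring
    calc ∑ p : Fin (m+2), (-1:ℤ)^(p:ℕ) •
          (L (MonoidAlgebra.single (v ∘ p.succAbove) 1) : S)
        = ∑ p : Fin (m+2), (-1:ℤ)^(m+1) •
            ∑ x : G, (x • c) * ((-1:ℤ)^(p:ℕ) • Fv (Fin.snoc (v ∘ p.succAbove) x)) := by
          refine Finset.sum_congr rfl fun p _ => ?_
          rw [hE1, hEf]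
          simp only
          rw [smul_comm ((-1:ℤ)^(p:ℕ)) ((-1:ℤ)^(m+1)), Finset.smul_sum]
          congr 1
          refine Finset.sum_congr rfl fun x _ => ?_
          rw [mul_smul_comm]
      _ = (-1:ℤ)^(m+1) • ∑ x : G, (x • c) *
            (∑ p : Fin (m+2), (-1:ℤ)^(p:ℕ) • Fv (Fin.snoc (v ∘ p.succAbove) x)) := by
          rw [← Finset.smul_sum, Finset.sum_comm]
          congr 1
          refine Finset.sum_congr rfl fun x _ => ?_
          rw [Finset.mul_sum]
      _ = (-1:ℤ)^(m+1) • ∑ x : G, (x • c) * ((-1:ℤ)^(m+3) • Fv v) := by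
          congr 1
          exact Finset.sum_congr rfl fun x _ => by rw [hinner x]
      _ = Fv v := by
          simp_rw [mul_smul_comm, ← Finset.smul_sum, ← Finset.sum_mul, hc, one_mul, smul_smul,
            ← pow_add]
          rw [show (m+1) + (m+3) = 2*(m+2) by ring, pow_mul]
          norm_num

set_option maxHeartbeats 1000000 in
lemma exact_part (c : S) (hc : ∑ g : G, g • c = 1) (m : ℕ) :
    ((Rep.standardComplex ℤ G).linearYonedaObj ℤ (A' G S)).ExactAt (m+1) := by
  rw [HomologicalComplex.exactAt_iff' _ m (m+1) (m+2)
    ((ComplexShape.up ℕ).prev_eq' (by simp)) ((ComplexShape.up ℕ).next_eq' (by simp))]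
  rw [ShortComplex.moduleCat_exact_iff]
  intro (F : Rep.ofMulAction ℤ G (Fin (m+2) → G) ⟶ A' G S) hF
  have hF' : (Rep.standardComplex ℤ G).d (m+1+1) (m+1) ≫ F = 0 := hF
  have hFw : ∀ w : Fin (m+3) → G,
      ∑ p : Fin (m+3), (-1:ℤ)^(p:ℕ) • (F.hom (MonoidAlgebra.single (w ∘ p.succAbove) 1) : S) = 0 := by
    intro w
    have h0 : ((Rep.standardComplex ℤ G).d (m+1+1) (m+1) ≫ F).hom
        (MonoidAlgebra.single w 1) = 0 := by rw [hF']; rfl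
    change F.hom (((Rep.standardComplex ℤ G).d (m+1+1) (m+1)).hom
      (MonoidAlgebra.single w 1)) = 0 at h0
    erw [Rep.standardComplex.d_apply] at h0
    erw [Rep.standardComplex.d_of, map_sum] at h0
    have hsm : ∀ (u : Fin (m+2) → G) (z : ℤ),
        F.hom (MonoidAlgebra.single u z) = z • (F.hom (MonoidAlgebra.single u 1) : S) :=
      fun u z => by
        rw [← map_smul, MonoidAlgebra.smul_single, smul_eq_mul, mul_one]
    rw [Finset.sum_congr rfl (fun (p : Fin (m+3)) _ => hsm (w ∘ p.succAbove) ((-1)^(p:ℕ)))] at h0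
    exact h0
  obtain ⟨E, hE⟩ := key c hc m (F : Rep.ofMulAction ℤ G (Fin (m+2) → G) ⟶ A' G S) hFw
  refine ⟨(E : (Rep.standardComplex ℤ G).X m ⟶ A' G S), ?_⟩
  show (Rep.standardComplex ℤ G).d (m+1) m ≫ E = F
  ext1
  apply Representation.IntertwiningMap.ext
  refine MonoidAlgebra.lhom_ext' fun (v : Fin (m+2) → G) => LinearMap.ext_ring ?_
  change E.hom (((Rep.standardComplex ℤ G).d (m+1) m).hom (MonoidAlgebra.single v 1))
    = F.hom (MonoidAlgebra.single v 1)
  erw [Rep.standardComplex.d_apply]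
  erw [Rep.standardComplex.d_of, map_sum]
  have hsm : ∀ (u : Fin (m+1) → G) (z : ℤ),
      E.hom (MonoidAlgebra.single u z) = z • (E.hom (MonoidAlgebra.single u 1) : S) :=
    fun u z => by
      rw [← map_smul, MonoidAlgebra.smul_single, smul_eq_mul, mul_one]
  rw [Finset.sum_congr rfl (fun (p : Fin (m+2)) _ => hsm (v ∘ p.succAbove) ((-1)^(p:ℕ)))]
  exact hE v

end AuxiliaryLemmas


theorem groupCohomology_vanishes_of_galois_ring_extension
    (p n : ℕ) (hp : p.Prime) (S : Type) [CommRing S] [CharP S p]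
    (G : Type) [Group G] [Fintype G] (hG : Fintype.card G = p ^ n)
    [MulSemiringAction G S]
    -- the action of G on S is faithful, so that G is a group of automorphisms of S
    (hfaithful : ∀ σ : G, (∀ s : S, σ • s = s) → σ = 1)
    -- S/R is a Galois extension of rings with group G (R = S^G is the fixed ring)
    (hgalois : ∀ M : Ideal S, M.IsMaximal → ∀ σ : G, σ ≠ 1 → ∃ s : S, σ • s - s ∉ M) :
    ∀ q : ℕ, 1 ≤ q →
      CategoryTheory.Limits.IsZero (groupCohomology (Rep.ofDistribMulAction ℤ G S) q) := by
  obtain ⟨c, hc⟩ := exists_trace_one hgalois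
  intro q hq
  obtain ⟨m, rfl⟩ : ∃ m, q = m + 1 := ⟨q - 1, by omega⟩
  have h2 : ((Rep.standardResolution ℤ G).complex.linearYonedaObj ℤ (A' G S)).ExactAt (m+1) :=
    exact_part c hc m
  exact (((Rep.standardResolution ℤ G).complex.linearYonedaObj ℤ (A' G S)).exactAt_iff_isZero_homology
    (m+1)).1 h2 |>.of_iso (groupCohomologyIso _ _ _)
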